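/- Assume f satisfies (f_reg), (f_eq), (f_0). Let u be a solution of the Cauchy problem with datum d > 0 on [R1,R2] and let r1 and H be as defined. If M > 0, r ∈ [R1,r1] and u(r) + |u'(r)| ≤ M, then H(r1) ≤ M^p/p' + max{F̂(0), F̂(M)}. Consequently, if lim_{d→∞} H_d(r1(d)) = +∞ along a family of solutions, then u_d(r) + |u_d'(r)| → +∞ as d → ∞ uniformly for r ∈ [R1, r1(d)]. -/

import Mathlib

open Real Set Filter Topology

noncomputable def phip (p s : ℝ) : ℝ := |s| ^ (p - 2) * s

def Freg (f : ℝ → ℝ) : Prop :=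
  ContinuousOn f (Ici 0) ∧ ContDiffOn ℝ 1 f (Ioi 0)

def Feq (f : ℝ → ℝ) : Prop :=
  f 0 = 0 ∧ f 1 = 0 ∧ (∀ s : ℝ, 0 < s → s < 1 → f s < 0) ∧ (∀ s : ℝ, 1 < s → 0 < f s)

def Fzero (p : ℝ) (f : ℝ → ℝ) : Prop :=
  ∃ c : ℝ, ∀ᶠ s in 𝓝[>] (0:ℝ), c ≤ f s / s ^ (p - 1)

noncomputable def pstar (p : ℝ) (N : ℕ) : EReal :=
  if p < (N:ℝ) then (((N:ℝ) * p / ((N:ℝ) - p) : ℝ) : EReal) else ⊤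

noncomputable def fstar (f : ℝ → ℝ) (s : ℝ) : ℝ := sSup (f '' Icc 1 s)

noncomputable def Fint (f : ℝ → ℝ) (s : ℝ) : ℝ := ∫ σ in (1:ℝ)..s, f σ

def Fsubl (p : ℝ) (f : ℝ → ℝ) : Prop :=
  ∃ M : ℝ, 0 < M ∧ ∀ ε > 0, ∀ᶠ s in atTop, f s / s ^ (p - 1) ≤ M + ε

def FsubcWith (p : ℝ) (N : ℕ) (f : ℝ → ℝ) (η : ℝ) : Prop :=
  (∀ c : ℝ, ∃ᶠ s in atTop, c < f s / s ^ (p - 1)) ∧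
  0 < η ∧ η < 1 ∧
  ∃ L : ℝ, (L : EReal) < pstar p N ∧
    ∀ᶠ s in atTop, fstar f s * s / Fint f (η * s) ≤ L

def Fsubc (p : ℝ) (N : ℕ) (f : ℝ → ℝ) : Prop := ∃ η : ℝ, FsubcWith p N f η

/-- A radial solution of the Neumann problem on `[R1,R2]`. -/
def NeumannSol (p : ℝ) (N : ℕ) (R1 R2 : ℝ) (f u : ℝ → ℝ) : Prop :=
  (∀ x ∈ Icc R1 R2, DifferentiableAt ℝ u x) ∧
  ContinuousOn (deriv u) (Icc R1 R2) ∧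
  (∀ x ∈ Icc R1 R2, 0 < u x) ∧
  deriv u R1 = 0 ∧ deriv u R2 = 0 ∧
  ContinuousOn (fun x => x ^ (N - 1) * phip p (deriv u x)) (Icc R1 R2) ∧
  ∀ x ∈ Ioc R1 R2,
    HasDerivAt (fun t => t ^ (N - 1) * phip p (deriv u t)) (-(x ^ (N - 1)) * f (u x)) x

noncomputable def fhat (f : ℝ → ℝ) (s : ℝ) : ℝ := if 0 ≤ s then f s else 0

noncomputable def Fhat (f : ℝ → ℝ) (s : ℝ) : ℝ := ∫ σ in (1:ℝ)..s, fhat f σ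

/-- A solution of the Cauchy problem with datum `d`, for the nonlinearity `g`. -/
def CauchySol (p : ℝ) (N : ℕ) (R1 R2 : ℝ) (g u : ℝ → ℝ) (d : ℝ) : Prop :=
  (∀ x ∈ Icc R1 R2, DifferentiableAt ℝ u x) ∧
  ContinuousOn (deriv u) (Icc R1 R2) ∧
  u R1 = d ∧ deriv u R1 = 0 ∧
  ContinuousOn (fun x => x ^ (N - 1) * phip p (deriv u x)) (Icc R1 R2) ∧
  ∀ x ∈ Ioc R1 R2,
    HasDerivAt (fun t => t ^ (N - 1) * phip p (deriv u t)) (-(x ^ (N - 1)) * g (u x)) x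

noncomputable def rOne (R1 R2 : ℝ) (u : ℝ → ℝ) : ℝ :=
  sSup {x | x ∈ Icc R1 R2 ∧ ∀ s ∈ Ico R1 x, 0 < u s}

noncomputable def rZero (R2 η d : ℝ) (u : ℝ → ℝ) : ℝ :=
  sSup {x | x ∈ Icc 0 R2 ∧ ∀ s ∈ Ico 0 x, η * d < u s}

noncomputable def energy (p : ℝ) (f u : ℝ → ℝ) (x : ℝ) : ℝ :=
  |deriv u x| ^ p / (p / (p - 1)) + Fhat f (u x)

def NonConstOn (R1 R2 : ℝ) (u : ℝ → ℝ) : Prop :=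
  ∃ x ∈ Icc R1 R2, ∃ x' ∈ Icc R1 R2, u x ≠ u x'

def DistinctOn (R1 R2 : ℝ) (u v : ℝ → ℝ) : Prop :=
  ∃ x ∈ Icc R1 R2, u x ≠ v x

noncomputable def nOverPstar (p : ℝ) (N : ℕ) : ℝ :=
  if p < (N:ℝ) then ((N:ℝ) - p) / p else 0


lemma aux_rpow_abs {q : ℝ} (hq : 1 < q) (t : ℝ) :
    HasDerivAt (fun s : ℝ => |s| ^ q) (q * (|t| ^ (q-2) * t)) t := by
  rcases lt_trichotomy t 0 with ht | rfl | ht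
  · have h1 : HasDerivAt (fun s : ℝ => (-s) ^ q) (q * (-t) ^ (q-1) * (-1)) t := by
      have := Real.hasDerivAt_rpow_const (x := -t) (p := q) (Or.inl (by linarith))
      exact this.comp t ((hasDerivAt_id t).neg)
    have h2 : (fun s : ℝ => (-s) ^ q) =ᶠ[𝓝 t] fun s => |s| ^ q := by
      filter_upwards [Iio_mem_nhds ht] with s hs
      rw [abs_of_neg hs]
    have h3 := h1.congr_of_eventuallyEq h2.symm
    have e : q * (-t) ^ (q-1) * (-1) = q * (|t| ^ (q-2) * t) := by
      rw [abs_of_neg ht, show q - 1 = (q-2) + 1 by ring,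
        Real.rpow_add_one (by linarith : (-t) ≠ 0)]
      ring
    rw [← e]; exact h3
  · have h0 : (q : ℝ) * (|(0:ℝ)| ^ (q-2) * 0) = 0 := by ring
    rw [h0, hasDerivAt_iff_tendsto_slope]
    have hb : Tendsto (fun s : ℝ => |s| ^ (q-1)) (𝓝[≠] 0) (𝓝 0) := by
      have hc : ContinuousAt (fun x : ℝ => x ^ (q-1)) |(0:ℝ)| := by
        rw [abs_zero]
        exact Real.continuousAt_rpow_const 0 (q-1) (Or.inr (by linarith))
      have h4 : Tendsto (fun s : ℝ => |s| ^ (q-1)) (𝓝 0) (𝓝 0) := by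
        have h5 := hc.comp continuous_abs.continuousAt (x := (0:ℝ))
        simp only [ContinuousAt, Function.comp] at h5
        simpa [Function.comp_def, Real.zero_rpow (by linarith : q - 1 ≠ 0)] using h5
      exact h4.mono_left nhdsWithin_le_nhds
    apply squeeze_zero_norm' _ hb
    filter_upwards [self_mem_nhdsWithin] with s hs
    have hs' : (s : ℝ) ≠ 0 := hs
    have habs : |s| ≠ 0 := abs_ne_zero.2 hs'
    have h6 : slope (fun s : ℝ => |s| ^ q) 0 s = |s| ^ q / s := by
      simp [slope_fun_def, Real.zero_rpow (by linarith : q ≠ 0)]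
      ring
    rw [h6, norm_div, Real.norm_eq_abs, Real.norm_eq_abs,
      abs_of_nonneg (Real.rpow_nonneg (abs_nonneg s) q)]
    have e2 : |s| ^ q = |s| ^ (q-1) * |s| := by
      nth_rewrite 1 [show q = (q-1)+1 by ring]
      rw [Real.rpow_add_one habs]
    rw [e2, mul_div_assoc, div_self habs, mul_one]
  · have h1 : HasDerivAt (fun s : ℝ => s ^ q) (q * t ^ (q-1)) t :=
      Real.hasDerivAt_rpow_const (Or.inl ht.ne')
    have h2 : (fun s : ℝ => s ^ q) =ᶠ[𝓝 t] fun s => |s| ^ q := by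
      filter_upwards [Ioi_mem_nhds ht] with s hs
      rw [abs_of_pos hs]
    have h3 := h1.congr_of_eventuallyEq h2.symm
    have e : q * t ^ (q-1) = q * (|t| ^ (q-2) * t) := by
      rw [abs_of_pos ht, show q - 1 = (q-2) + 1 by ring, Real.rpow_add_one ht.ne']
    rw [← e]; exact h3

lemma abs_phip {p : ℝ} (hp : 1 < p) (s : ℝ) : |phip p s| = |s| ^ (p-1) := by
  rcases eq_or_ne s 0 with rfl | hs
  · simp [phip, Real.zero_rpow (by linarith : p - 1 ≠ 0)]
  · have habs : |s| ≠ 0 := abs_ne_zero.2 hs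
    rw [phip, abs_mul, abs_of_nonneg (Real.rpow_nonneg (abs_nonneg s) _),
      show p - 1 = (p-2) + 1 by ring, Real.rpow_add_one habs]

lemma phiq_phip {p : ℝ} (hp : 1 < p) (s : ℝ) :
    |phip p s| ^ (p/(p-1) - 2) * phip p s = s := by
  rcases eq_or_ne s 0 with rfl | hs
  · simp [phip]
  · have hp1 : p - 1 ≠ 0 := by linarith
    have habs : (0:ℝ) < |s| := abs_pos.2 hs
    rw [abs_phip hp, phip, ← Real.rpow_mul (abs_nonneg s), ← mul_assoc,
      ← Real.rpow_add habs]
    have : (p - 1) * (p / (p - 1) - 2) + (p - 2) = 0 := by field_simp; ring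
    rw [this, Real.rpow_zero, one_mul]

lemma abs_phip_rpow {p : ℝ} (hp : 1 < p) (s : ℝ) :
    |phip p s| ^ (p/(p-1)) = |s| ^ p := by
  have hp1 : p - 1 ≠ 0 := by linarith
  rw [abs_phip hp, ← Real.rpow_mul (abs_nonneg s)]
  congr 1
  field_simp

lemma mul_phip_self {p : ℝ} (hp : 1 < p) (s : ℝ) :
    s * phip p s = |s| ^ p := by
  rcases eq_or_ne s 0 with rfl | hs
  · simp [phip, Real.zero_rpow (by linarith : p ≠ 0)]
  · have habs : (0:ℝ) < |s| := abs_pos.2 hs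
    have : s * phip p s = |s| ^ (p-2) * s ^ 2 := by rw [phip]; ring
    rw [this, ← sq_abs, ← Real.rpow_natCast |s| 2, ← Real.rpow_add habs]
    norm_num

lemma fhat_eq_comp_max {f : ℝ → ℝ} (hf0 : f 0 = 0) :
    fhat f = fun s => f (max s 0) := by
  funext s
  rcases le_or_gt 0 s with hs | hs
  · rw [fhat, if_pos hs, max_eq_left hs]
  · rw [fhat, if_neg (not_le.2 hs), max_eq_right hs.le, hf0]

lemma continuous_fhat {f : ℝ → ℝ} (hreg : ContinuousOn f (Ici 0)) (hf0 : f 0 = 0) :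
    Continuous (fhat f) := by
  rw [fhat_eq_comp_max hf0]
  exact hreg.comp_continuous (continuous_id.max continuous_const)
    (fun x => le_max_right x 0)

lemma hasDerivAt_Fhat {f : ℝ → ℝ} (hreg : ContinuousOn f (Ici 0)) (hf0 : f 0 = 0)
    (s : ℝ) : HasDerivAt (Fhat f) (fhat f s) s := by
  have hc := continuous_fhat hreg hf0
  exact intervalIntegral.integral_hasDerivAt_right (hc.intervalIntegrable _ _)
    (hc.stronglyMeasurableAtFilter _ _) hc.continuousAt

open intervalIntegral in
lemma Fhat_sub {f : ℝ → ℝ} (hreg : ContinuousOn f (Ici 0)) (hf0 : f 0 = 0)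
    (a b : ℝ) : Fhat f b - Fhat f a = ∫ σ in a..b, fhat f σ := by
  have hc := continuous_fhat hreg hf0
  rw [Fhat, Fhat]
  exact integral_interval_sub_left (hc.intervalIntegrable _ _)
    (hc.intervalIntegrable _ _)

lemma Fhat_le_max {f : ℝ → ℝ} (hreg : ContinuousOn f (Ici 0)) (heq : Feq f)
    {t M : ℝ} (ht0 : 0 ≤ t) (htM : t ≤ M) :
    Fhat f t ≤ max (Fhat f 0) (Fhat f M) := by
  obtain ⟨hf0, hf1, hneg, hpos⟩ := heq
  have hc := continuous_fhat hreg hf0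
  rcases le_or_gt t 1 with h1 | h1
  · refine le_max_of_le_left ?_
    have h7 : 0 ≤ ∫ σ in (0:ℝ)..t, (fun x => - fhat f x) σ := by
      apply intervalIntegral.integral_nonneg ht0
      intro x hx
      rw [neg_nonneg]
      rcases eq_or_lt_of_le hx.1 with rfl | hx0
      · simp [fhat, hf0]
      · rcases eq_or_lt_of_le (hx.2.trans h1) with hx1 | hx1
        · simp [fhat, hx0.le, hx1, hf1]
        · rw [fhat, if_pos hx0.le]; exact (hneg x hx0 hx1).le
    rw [intervalIntegral.integral_neg] at h7
    have h8 := Fhat_sub hreg hf0 0 t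
    linarith
  · refine le_max_of_le_right ?_
    have h7 : 0 ≤ ∫ σ in t..M, fhat f σ := by
      apply intervalIntegral.integral_nonneg htM
      intro x hx
      have hx0 : (0:ℝ) ≤ x := le_trans (by linarith) hx.1
      rcases eq_or_lt_of_le (h1.le.trans hx.1) with hx1 | hx1
      · simp [fhat, hx0, ← hx1, hf1]
      · rw [fhat, if_pos hx0]; exact (hpos x hx1).le
    have h8 := Fhat_sub hreg hf0 t M
    linarith

lemma rOne_set_mem {R1 R2 : ℝ} (h12 : R1 ≤ R2) (u : ℝ → ℝ) :
    R1 ∈ {x | x ∈ Icc R1 R2 ∧ ∀ s ∈ Ico R1 x, 0 < u s} :=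
  ⟨⟨le_refl _, h12⟩, by simp⟩

lemma rOne_mem {R1 R2 : ℝ} (h12 : R1 ≤ R2) (u : ℝ → ℝ) :
    rOne R1 R2 u ∈ Icc R1 R2 := by
  have hbdd : BddAbove {x | x ∈ Icc R1 R2 ∧ ∀ s ∈ Ico R1 x, 0 < u s} :=
    ⟨R2, fun x hx => hx.1.2⟩
  exact ⟨le_csSup hbdd (rOne_set_mem h12 u),
    csSup_le ⟨R1, rOne_set_mem h12 u⟩ (fun x hx => hx.1.2)⟩

lemma pos_of_lt_rOne {R1 R2 : ℝ} (h12 : R1 ≤ R2) (u : ℝ → ℝ) :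
    ∀ s ∈ Ico R1 (rOne R1 R2 u), 0 < u s := by
  intro s hs
  obtain ⟨x, hxS, hsx⟩ := exists_lt_of_lt_csSup ⟨R1, rOne_set_mem h12 u⟩ hs.2
  exact hxS.2 s ⟨hs.1, hsx⟩

lemma energy_hasDerivAt {p : ℝ} (hp : 1 < p) {N : ℕ} {R1 R2 : ℝ} (hR1 : 0 ≤ R1)
    {f u : ℝ → ℝ} (hreg : ContinuousOn f (Ici 0)) (hf0 : f 0 = 0)
    (hdiff : ∀ x ∈ Icc R1 R2, DifferentiableAt ℝ u x)
    (hode : ∀ x ∈ Ioc R1 R2, HasDerivAt (fun t => t ^ (N-1) * phip p (deriv u t))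
      (-(x ^ (N-1)) * fhat f (u x)) x)
    {x : ℝ} (hx : x ∈ Ioc R1 R2) :
    HasDerivAt (energy p f u) (-(((N-1 : ℕ) : ℝ) * |deriv u x| ^ p / x)) x := by
  have hp1 : (0:ℝ) < p - 1 := by linarith
  set q : ℝ := p / (p - 1) with hqdef
  have hq : 1 < q := by rw [hqdef, lt_div_iff₀ hp1]; linarith
  have hq0 : q ≠ 0 := by positivity
  set n : ℕ := N - 1 with hn
  have hx0 : 0 < x := lt_of_le_of_lt hR1 hx.1
  have hxn : x ^ n ≠ 0 := pow_ne_zero _ hx0.ne'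
  have hu' : HasDerivAt u (deriv u x) x := (hdiff x (Ioc_subset_Icc_self hx)).hasDerivAt
  have hv : HasDerivAt (fun t => t ^ n * phip p (deriv u t))
      (-(x ^ n) * fhat f (u x)) x := hode x hx
  have hc : HasDerivAt (fun t : ℝ => (t ^ n)⁻¹)
      (-(↑n * x ^ (n-1)) / (x ^ n) ^ 2) x := (hasDerivAt_pow n x).inv hxn
  have hvc := hv.mul hc
  have hev : (fun t => (t ^ n * phip p (deriv u t)) * (t ^ n)⁻¹)
      =ᶠ[𝓝 x] (fun t => phip p (deriv u t)) := by
    filter_upwards [Ioi_mem_nhds hx0] with t ht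
    have : (t:ℝ) ^ n ≠ 0 := pow_ne_zero _ (ne_of_gt ht)
    field_simp
  have hwD : HasDerivAt (fun t => phip p (deriv u t))
      (-(fhat f (u x)) - ↑n * phip p (deriv u x) / x) x := by
    have h1 := hvc.congr_of_eventuallyEq hev.symm
    refine h1.congr_deriv ?_
    cases n with
    | zero => simp
    | succ k =>
      have hxk : x ^ (k+1-1) = x ^ k := rfl
      rw [hxk]
      have hxk' : (x:ℝ) ^ k ≠ 0 := pow_ne_zero _ hx0.ne'
      field_simp
      ring
  have hcomp : HasDerivAt (fun t => |phip p (deriv u t)| ^ q / q)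
      ((q * (|phip p (deriv u x)| ^ (q-2) * phip p (deriv u x))) / q *
        (-(fhat f (u x)) - ↑n * phip p (deriv u x) / x)) x :=
    by have h := ((aux_rpow_abs hq (phip p (deriv u x))).div_const q).comp x hwD; exact h
  have hF : HasDerivAt (fun t => Fhat f (u t)) (fhat f (u x) * deriv u x) x :=
    (hasDerivAt_Fhat hreg hf0 (u x)).comp x hu'
  have hsum := hcomp.add hF
  have hEeq : energy p f u = fun t => |phip p (deriv u t)| ^ q / q + Fhat f (u t) := by
    funext t
    rw [energy, abs_phip_rpow hp]
  rw [hEeq]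
  have hslope : (q * (|phip p (deriv u x)| ^ (q-2) * phip p (deriv u x))) / q *
        (-(fhat f (u x)) - ↑n * phip p (deriv u x) / x) + fhat f (u x) * deriv u x
      = -(↑n * |deriv u x| ^ p / x) := by
    rw [mul_div_cancel_left₀ _ hq0, phiq_phip hp, ← mul_phip_self hp]
    field_simp
    ring
  rw [← hslope]
  exact hsum

lemma energy_antitoneOn {p : ℝ} (hp : 1 < p) {N : ℕ} {R1 R2 : ℝ} (hR1 : 0 ≤ R1)
    (h12 : R1 ≤ R2) {f u : ℝ → ℝ} (hreg : ContinuousOn f (Ici 0)) (hf0 : f 0 = 0)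
    (hdiff : ∀ x ∈ Icc R1 R2, DifferentiableAt ℝ u x)
    (hderc : ContinuousOn (deriv u) (Icc R1 R2))
    (hode : ∀ x ∈ Ioc R1 R2, HasDerivAt (fun t => t ^ (N-1) * phip p (deriv u t))
      (-(x ^ (N-1)) * fhat f (u x)) x) :
    AntitoneOn (energy p f u) (Icc R1 (rOne R1 R2 u)) := by
  have hr1 := rOne_mem h12 u
  have hsub : Icc R1 (rOne R1 R2 u) ⊆ Icc R1 R2 := Icc_subset_Icc le_rfl hr1.2
  have hFc : Continuous (Fhat f) := by
    have : Differentiable ℝ (Fhat f) := fun s => (hasDerivAt_Fhat hreg hf0 s).differentiableAt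
    exact this.continuous
  have hucont : ContinuousOn u (Icc R1 R2) :=
    fun x hx => (hdiff x hx).continuousAt.continuousWithinAt
  have hcont : ContinuousOn (energy p f u) (Icc R1 R2) := by
    apply ContinuousOn.add
    · exact (hderc.abs.rpow_const (fun x _ => Or.inr (by linarith))).div_const _
    · exact hFc.comp_continuousOn hucont
  apply antitoneOn_of_deriv_nonpos (convex_Icc _ _) (hcont.mono hsub)
  · intro x hx
    rw [interior_Icc] at hx
    have hx' : x ∈ Ioc R1 R2 := ⟨hx.1, le_trans hx.2.le hr1.2⟩
    exact (energy_hasDerivAt hp hR1 hreg hf0 hdiff hode hx').differentiableAt.differentiableWithinAt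
  · intro x hx
    rw [interior_Icc] at hx
    have hx' : x ∈ Ioc R1 R2 := ⟨hx.1, le_trans hx.2.le hr1.2⟩
    rw [(energy_hasDerivAt hp hR1 hreg hf0 hdiff hode hx').deriv]
    have hx0 : 0 < x := lt_of_le_of_lt hR1 hx.1
    have : 0 ≤ ((N-1:ℕ):ℝ) * |deriv u x| ^ p / x := by positivity
    linarith

theorem stmt9 (p : ℝ) (hp : 1 < p) (N : ℕ) (hN : 1 ≤ N)
    (R1 R2 : ℝ) (hR1 : 0 ≤ R1) (hR12 : R1 < R2)
    (f : ℝ → ℝ) (hreg : Freg f) (heq : Feq f) (h0 : Fzero p f) :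
    (∀ d : ℝ, 0 < d → ∀ u : ℝ → ℝ, CauchySol p N R1 R2 (fhat f) u d →
      ∀ M : ℝ, 0 < M → ∀ x ∈ Icc R1 (rOne R1 R2 u), u x + |deriv u x| ≤ M →
        energy p f u (rOne R1 R2 u) ≤ M ^ p / (p / (p - 1)) + max (Fhat f 0) (Fhat f M)) ∧
    (∀ U : ℝ → ℝ → ℝ,
      (∀ᶠ d in atTop, CauchySol p N R1 R2 (fhat f) (U d) d) →
      Tendsto (fun d => energy p f (U d) (rOne R1 R2 (U d))) atTop atTop →
      ∀ M : ℝ, ∀ᶠ d in atTop, ∀ x ∈ Icc R1 (rOne R1 R2 (U d)),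
        M ≤ U d x + |deriv (U d) x|) := by
  have hfc : ContinuousOn f (Ici 0) := hreg.1
  have hf0 : f 0 = 0 := heq.1
  have part1 : ∀ d : ℝ, 0 < d → ∀ u : ℝ → ℝ, CauchySol p N R1 R2 (fhat f) u d →
      ∀ M : ℝ, 0 < M → ∀ x ∈ Icc R1 (rOne R1 R2 u), u x + |deriv u x| ≤ M →
        energy p f u (rOne R1 R2 u) ≤ M ^ p / (p / (p - 1)) + max (Fhat f 0) (Fhat f M) := by
    intro d hd u hsol M hM x hx hbound
    obtain ⟨hdiff, hderc, huR1, _, _, hode⟩ := hsol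
    have hr1 := rOne_mem hR12.le u
    have hux0 : 0 ≤ u x := by
      rcases eq_or_lt_of_le hx.2 with hxe | hxl
      · rw [hxe]
        rcases eq_or_lt_of_le hr1.1 with h | h
        · rw [← h, huR1]; exact hd.le
        · have hcl : rOne R1 R2 u ∈ closure (Ico R1 (rOne R1 R2 u)) := by
            rw [closure_Ico h.ne]; exact ⟨h.le, le_rfl⟩
          have hne : (𝓝[Ico R1 (rOne R1 R2 u)] (rOne R1 R2 u)).NeBot :=
            mem_closure_iff_nhdsWithin_neBot.1 hcl
          have ht : Tendsto u (𝓝[Ico R1 (rOne R1 R2 u)] (rOne R1 R2 u))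
              (𝓝 (u (rOne R1 R2 u))) :=
            (hdiff _ hr1).continuousAt.continuousWithinAt
          refine ge_of_tendsto ht ?_
          filter_upwards [self_mem_nhdsWithin] with s hs
          exact (pos_of_lt_rOne hR12.le u s hs).le
      · exact (pos_of_lt_rOne hR12.le u x ⟨hx.1, hxl⟩).le
    have h1 : energy p f u (rOne R1 R2 u) ≤ energy p f u x :=
      energy_antitoneOn hp hR1 hR12.le hfc hf0 hdiff hderc hode hx
        ⟨hr1.1, le_rfl⟩ hx.2
    have habsnn := abs_nonneg (deriv u x)
    have habs : |deriv u x| ≤ M := by linarith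
    have huxM : u x ≤ M := by linarith
    have hqpos : 0 < p / (p - 1) := div_pos (by linarith) (by linarith)
    have h2 : energy p f u x ≤ M ^ p / (p / (p - 1)) + max (Fhat f 0) (Fhat f M) := by
      rw [energy]
      apply add_le_add
      · exact div_le_div_of_nonneg_right
          (Real.rpow_le_rpow (abs_nonneg _) habs (by linarith)) hqpos.le
      · exact Fhat_le_max hfc heq hux0 huxM
    linarith
  refine ⟨part1, ?_⟩
  intro U hCS hE M
  set M' : ℝ := max M 1 with hM'def
  have hM'pos : (0:ℝ) < M' := lt_of_lt_of_le one_pos (le_max_right _ _)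
  have h1 : ∀ᶠ d in atTop,
      (M' ^ p / (p / (p - 1)) + max (Fhat f 0) (Fhat f M')) <
        energy p f (U d) (rOne R1 R2 (U d)) := hE.eventually_gt_atTop _
  filter_upwards [hCS, h1, eventually_gt_atTop 0] with d hsol hgt hd
  intro x hx
  by_contra hcon
  push_neg at hcon
  have hle : U d x + |deriv (U d) x| ≤ M' :=
    le_of_lt (lt_of_lt_of_le hcon (le_max_left M 1))
  have := part1 d hd (U d) hsol M' hM'pos x hx hle
  linarith
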